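/- For every w ≥ 1 there exists a finite simple graph G with exactly 5w vertices and maximum degree w + 2 that admits an execution of algorithm A_MIS under the central scheduler, starting from the configuration in which every vertex has state OUT, consisting of at least w² moves. -/

import Mathlib

/-- Degree of a vertex: the number of its neighbors. -/
noncomputable def deg {V : Type*} (G : SimpleGraph V) (v : V) : ℕ :=
  Nat.card (G.neighborSet v)

/-- Maximum degree Δ of a finite graph. -/
noncomputable def maxDeg {V : Type*} [Fintype V] (G : SimpleGraph V) : ℕ :=
  Finset.univ.sup (deg G)

/-- A configuration assigns each vertex a state: `true` = IN, `false` = OUT.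
Vertex `v` is enabled in `s` iff rule R1 applies (`s v = OUT` and
`I≤(v,s) = {w ∈ N(v) : deg w ≤ deg v ∧ s w = IN}` is empty) or rule R2 applies
(`s v = IN` and `I≤(v,s)` is nonempty). -/
def Enabled {V : Type*} (G : SimpleGraph V) (s : V → Bool) (v : V) : Prop :=
  (s v = false ∧ ∀ w, G.Adj v w → deg G w ≤ deg G v → s w = false) ∨
  (s v = true ∧ ∃ w, G.Adj v w ∧ deg G w ≤ deg G v ∧ s w = true)

/-- A move of the central scheduler: flip the state of one enabled vertex. -/
def Move {V : Type*} [DecidableEq V] (G : SimpleGraph V) (s s' : V → Bool) : Prop :=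
  ∃ v, Enabled G s v ∧ s' = Function.update s v (!s v)

/-! ### The construction -/

def brel (w a b : ℕ) : Prop :=
  (a < w ∧ w ≤ b ∧ b < 2*w) ∨ (w ≤ a ∧ a < 2*w ∧ b = a + w) ∨
  (a < w ∧ (b = 3*w + a ∨ b = 4*w + a))

instance : ∀ w a b, Decidable (brel w a b) := fun w a b => by
  unfold brel; infer_instance

def AG (w : ℕ) : SimpleGraph (Fin (5*w)) where
  Adj a b := brel w a.val b.val ∨ brel w b.val a.val
  symm := ⟨fun a b h => h.symm⟩
  loopless := ⟨fun a h => by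
    rcases h with h | h <;> rcases h with h | h | h <;> omega⟩

lemma AG_adj {w : ℕ} (a b : Fin (5*w)) :
    (AG w).Adj a b ↔ brel w a.val b.val ∨ brel w b.val a.val := Iff.rfl

instance AGdec (w : ℕ) : DecidableRel (AG w).Adj := fun a b => by
  rw [AG_adj]; infer_instance

lemma card_filter_fin (n : ℕ) (p : ℕ → Prop) [DecidablePred p] :
    (Finset.univ.filter (fun v : Fin n => p v.val)).card
      = ((Finset.range n).filter p).card := by
  apply Finset.card_bij (fun a _ => a.val)
  · intro a ha
    simp only [Finset.mem_filter, Finset.mem_range, Finset.mem_univ, true_and] at *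
    exact ⟨a.isLt, ha⟩
  · intro a _ b _ h; exact Fin.ext h
  · intro b hb
    simp only [Finset.mem_filter, Finset.mem_range] at hb
    exact ⟨⟨b, hb.1⟩, by simp [hb.2], rfl⟩

lemma deg_eq {w : ℕ} (a : Fin (5*w)) :
    deg (AG w) a = ((Finset.range (5*w)).filter
      (fun b => brel w a.val b ∨ brel w b a.val)).card := by
  have h1 : deg (AG w) a = ((AG w).neighborFinset a).card := by
    rw [deg, Nat.card_eq_fintype_card, SimpleGraph.neighborFinset,
      Set.toFinset_card]
  rw [h1]
  apply Finset.card_bij (fun b _ => b.val)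
  · intro b hb
    rw [SimpleGraph.mem_neighborFinset, AG_adj] at hb
    simp only [Finset.mem_filter, Finset.mem_range]
    exact ⟨b.isLt, hb⟩
  · intro x _ y _ h; exact Fin.ext h
  · intro b hb
    simp only [Finset.mem_filter, Finset.mem_range] at hb
    exact ⟨⟨b, hb.1⟩, by rw [SimpleGraph.mem_neighborFinset, AG_adj]; exact hb.2, rfl⟩

lemma deg_x {w : ℕ} (hw : 1 ≤ w) (a : Fin (5*w)) (h : a.val < w) :
    deg (AG w) a = w + 2 := by
  rw [deg_eq]
  have : ((Finset.range (5*w)).filter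
      (fun b => brel w a.val b ∨ brel w b a.val))
      = insert (3*w + a.val) (insert (4*w + a.val) (Finset.Ico w (2*w))) := by
    ext b
    rw [Finset.mem_filter]
    simp only [Finset.mem_filter, Finset.mem_range, Finset.mem_insert,
      Finset.mem_Ico, brel]
    omega
  rw [this, Finset.card_insert_of_notMem (by simp [Finset.mem_Ico]; omega),
    Finset.card_insert_of_notMem (by simp [Finset.mem_Ico]; omega),
    Nat.card_Ico]
  omega

lemma deg_u {w : ℕ} (hw : 1 ≤ w) (a : Fin (5*w)) (h1 : w ≤ a.val)
    (h2 : a.val < 2*w) : deg (AG w) a = w + 1 := by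
  rw [deg_eq]
  have : ((Finset.range (5*w)).filter
      (fun b => brel w a.val b ∨ brel w b a.val))
      = insert (a.val + w) (Finset.range w) := by
    ext b
    rw [Finset.mem_filter]
    simp only [Finset.mem_filter, Finset.mem_range, Finset.mem_insert, brel]
    omega
  rw [this, Finset.card_insert_of_notMem (by simp only [Finset.mem_range]; omega), Finset.card_range]

lemma deg_leaf {w : ℕ} (hw : 1 ≤ w) (a : Fin (5*w)) (h : 2*w ≤ a.val) :
    deg (AG w) a = 1 := by
  rw [deg_eq]
  have ha := a.isLt
  have : ((Finset.range (5*w)).filter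
      (fun b => brel w a.val b ∨ brel w b a.val))
      = {if a.val < 3*w then a.val - w else if a.val < 4*w then a.val - 3*w
          else a.val - 4*w} := by
    ext b
    rw [Finset.mem_filter]
    simp only [Finset.mem_filter, Finset.mem_range, Finset.mem_singleton, brel]
    split <;> [skip; split] <;> omega
  rw [this, Finset.card_singleton]

lemma maxDeg_AG {w : ℕ} (hw : 1 ≤ w) : maxDeg (AG w) = w + 2 := by
  apply le_antisymm
  · apply Finset.sup_le
    intro a _
    rcases lt_or_ge a.val w with h | h
    · rw [deg_x hw a h]
    rcases lt_or_ge a.val (2*w) with h2 | h2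
    · rw [deg_u hw a h h2]; omega
    · rw [deg_leaf hw a h2]; omega
  · have h0 : (0:ℕ) < 5*w := by omega
    have := Finset.le_sup (f := deg (AG w)) (Finset.mem_univ (⟨0, h0⟩ : Fin (5*w)))
    rwa [deg_x hw _ (by show 0 < w; omega)] at this

section Exec
variable {V : Type*} [DecidableEq V] (G : SimpleGraph V)

def play (s : V → Bool) : List V → (V → Bool)
  | [] => s
  | v :: l => play (Function.update s v (!s v)) l

def ValidSeq (s : V → Bool) : List V → Prop
  | [] => True
  | v :: l => Enabled G s v ∧ ValidSeq (Function.update s v (!s v)) l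

lemma play_append (s : V → Bool) (l1 l2 : List V) :
    play s (l1 ++ l2) = play (play s l1) l2 := by
  induction l1 generalizing s with
  | nil => rfl
  | cons v t ih => simp [play, ih]

lemma valid_append {s : V → Bool} {l1 l2 : List V}
    (h1 : ValidSeq G s l1) (h2 : ValidSeq G (play s l1) l2) :
    ValidSeq G s (l1 ++ l2) := by
  induction l1 generalizing s with
  | nil => exact h2
  | cons v t ih => exact ⟨h1.1, ih h1.2 h2⟩
end Exec

/-! ### Vertices and configurations -/

def emb (w : ℕ) (h : 0 < w) (j : ℕ) : Fin (5*w) :=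
  ⟨j % (5*w), Nat.mod_lt _ (by omega)⟩

lemma emb_val {w : ℕ} (h : 0 < w) {j : ℕ} (hj : j < 5*w) :
    (emb w h j).val = j := Nat.mod_eq_of_lt hj

lemma ne_emb {w : ℕ} (h : 0 < w) {v : Fin (5*w)} {j : ℕ} (hj : j < 5*w)
    (hne : v ≠ emb w h j) : v.val ≠ j :=
  fun hv => hne (Fin.ext (by rw [emb_val h hj]; exact hv))

/-- Configuration: x's with index `< X` are IN, `u_i` is IN iff `u?`,
u-leaves `2w..2w+L-1` are IN. -/
def cfg (w L X i : ℕ) (u? : Bool) : Fin (5*w) → Bool := fun v =>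
  decide (v.val < X ∨ (u? = true ∧ v.val = w + i) ∨
    (2*w ≤ v.val ∧ v.val < 2*w + L))

lemma cfg_false {w L X i : ℕ} {u? : Bool} (v : Fin (5*w))
    (hv : ¬(v.val < X ∨ (u? = true ∧ v.val = w + i) ∨
      (2*w ≤ v.val ∧ v.val < 2*w + L))) : cfg w L X i u? v = false :=
  decide_eq_false hv

lemma cfg_true {w L X i : ℕ} {u? : Bool} (v : Fin (5*w))
    (hv : v.val < X ∨ (u? = true ∧ v.val = w + i) ∨
      (2*w ≤ v.val ∧ v.val < 2*w + L)) : cfg w L X i u? v = true :=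
  decide_eq_true hv

/-! ### Move lists -/

def xsUp (w : ℕ) (h : 0 < w) (t : ℕ) : List (Fin (5*w)) :=
  (List.range (w - t)).map (fun k => emb w h (t + k))

def xsDown (w : ℕ) (h : 0 < w) (t : ℕ) : List (Fin (5*w)) :=
  (List.range t).reverse.map (emb w h)

def roundL (w : ℕ) (h : 0 < w) (i : ℕ) : List (Fin (5*w)) :=
  xsUp w h 0 ++ [emb w h (w+i)] ++ xsDown w h w ++
    [emb w h (2*w+i), emb w h (w+i)]

def fullL (w : ℕ) (h : 0 < w) (n : ℕ) : List (Fin (5*w)) :=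
  (List.range n).flatMap (roundL w h)

lemma len_roundL (w : ℕ) (h : 0 < w) (i : ℕ) :
    (roundL w h i).length = 2*w + 3 := by
  simp [roundL, xsUp, xsDown]; omega

lemma len_fullL (w : ℕ) (h : 0 < w) (n : ℕ) :
    (fullL w h n).length = n * (2*w + 3) := by
  induction n with
  | zero => simp [fullL]
  | succ n ih =>
    rw [fullL, List.range_succ, List.flatMap_append] at *
    simp only [List.length_append, ih, List.flatMap_cons, List.flatMap_nil,
      List.append_nil, len_roundL]
    ring

lemma adj_x_elim {w : ℕ} {a b : Fin (5*w)} (ha : a.val < w)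
    (hadj : (AG w).Adj a b) :
    (w ≤ b.val ∧ b.val < 2*w) ∨ b.val = 3*w + a.val ∨ b.val = 4*w + a.val := by
  simp only [AG_adj, brel] at hadj; omega

lemma adj_u_elim {w : ℕ} {a b : Fin (5*w)} (ha1 : w ≤ a.val)
    (ha2 : a.val < 2*w) (hadj : (AG w).Adj a b) :
    b.val < w ∨ b.val = a.val + w := by
  simp only [AG_adj, brel] at hadj; omega

lemma adj_leaf_elim {w : ℕ} {a b : Fin (5*w)} (ha1 : 2*w ≤ a.val)
    (ha2 : a.val < 3*w) (hadj : (AG w).Adj a b) :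
    b.val + w = a.val := by
  simp only [AG_adj, brel] at hadj; omega

lemma adj_xu {w : ℕ} (h : 0 < w) {j k : ℕ} (hj : j < w) (hk1 : w ≤ k)
    (hk2 : k < 2*w) : (AG w).Adj (emb w h j) (emb w h k) := by
  refine Or.inl (Or.inl ?_)
  rw [emb_val h (by omega), emb_val h (by omega)]
  exact ⟨hj, hk1, hk2⟩

lemma adj_uleaf {w : ℕ} (h : 0 < w) {i : ℕ} (hi : i < w) :
    (AG w).Adj (emb w h (w+i)) (emb w h (2*w+i)) := by
  refine Or.inl (Or.inr (Or.inl ?_))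
  rw [emb_val h (by omega), emb_val h (by omega)]
  omega

lemma phaseA {w : ℕ} (h : 0 < w) (L i : ℕ) (hL : L ≤ w) (hi : i < w) :
    ∀ n t, t ≤ w → w - t = n →
      ValidSeq (AG w) (cfg w L t i false) (xsUp w h t) ∧
      play (cfg w L t i false) (xsUp w h t) = cfg w L w i false := by
  intro n
  induction n with
  | zero =>
    intro t ht hn
    have htw : w = t := by omega
    subst htw
    have hnil : xsUp w h w = [] := by simp [xsUp]
    rw [hnil]
    exact ⟨trivial, rfl⟩
  | succ n ih =>
    intro t ht hn
    have htw : t < w := by omega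
    have hxs : xsUp w h t = emb w h t :: xsUp w h (t+1) := by
      rw [xsUp, xsUp, hn, show w - (t+1) = n from by omega,
        List.range_succ_eq_map]
      simp only [List.map_cons, List.map_map]
      congr 1
      apply List.map_congr_left
      intro k _
      show emb w h (t + (k+1)) = emb w h (t+1+k)
      congr 1
      omega
    have hEt : cfg w L t i false (emb w h t) = false := by
      apply cfg_false
      rw [emb_val h (by omega)]
      rintro (h1 | ⟨h2, -⟩ | ⟨h3, h4⟩)
      · omega
      · simp at h2
      · omega
    have hen : Enabled (AG w) (cfg w L t i false) (emb w h t) := by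
      left
      refine ⟨hEt, ?_⟩
      intro b hadj _
      have hb := adj_x_elim (by rw [emb_val h (by omega)]; omega) hadj
      rw [emb_val h (by omega)] at hb
      apply cfg_false
      rintro (h1 | ⟨h2, -⟩ | ⟨h3, h4⟩)
      · omega
      · simp at h2
      · omega
    have hupd : Function.update (cfg w L t i false) (emb w h t)
        (!(cfg w L t i false (emb w h t))) = cfg w L (t+1) i false := by
      funext v
      rcases eq_or_ne v (emb w h t) with rfl | hv
      · rw [Function.update_self, hEt,
          cfg_true _ (Or.inl (by rw [emb_val h (by omega)]; omega))]
        rfl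
      · rw [Function.update_of_ne hv]
        have hvt := ne_emb h (by omega) hv
        rw [cfg, cfg, decide_eq_decide]
        simp only [Bool.false_eq_true, false_and, false_or]
        omega
    rw [hxs]
    obtain ⟨ih1, ih2⟩ := ih (t+1) (by omega) (by omega)
    constructor
    · exact ⟨hen, by rw [hupd]; exact ih1⟩
    · show play (Function.update (cfg w L t i false) (emb w h t)
        (!(cfg w L t i false (emb w h t)))) (xsUp w h (t+1)) = _
      rw [hupd]; exact ih2

lemma phaseB {w : ℕ} (h : 0 < w) (L i : ℕ) (hL : L ≤ w) (hi : i < w) :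
    ∀ t, t ≤ w →
      ValidSeq (AG w) (cfg w L t i true) (xsDown w h t) ∧
      play (cfg w L t i true) (xsDown w h t) = cfg w L 0 i true := by
  intro t
  induction t with
  | zero =>
    intro _
    have hnil : xsDown w h 0 = [] := by simp [xsDown]
    rw [hnil]
    exact ⟨trivial, rfl⟩
  | succ t ih =>
    intro ht
    have hxs : xsDown w h (t+1) = emb w h t :: xsDown w h t := by
      rw [xsDown, xsDown, List.range_succ, List.reverse_append]
      simp
    have hEt : cfg w L (t+1) i true (emb w h t) = true := by
      apply cfg_true
      rw [emb_val h (by omega)]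
      omega
    have hen : Enabled (AG w) (cfg w L (t+1) i true) (emb w h t) := by
      right
      refine ⟨hEt, emb w h (w+i), adj_xu h (by omega) (by omega) (by omega), ?_, ?_⟩
      · rw [deg_u h (emb w h (w+i)) (by rw [emb_val h (by omega)]; omega)
            (by rw [emb_val h (by omega)]; omega),
          deg_x h (emb w h t) (by rw [emb_val h (by omega)]; omega)]
        omega
      · apply cfg_true
        rw [emb_val h (by omega)]
        exact Or.inr (Or.inl ⟨rfl, rfl⟩)
    have hEf : cfg w L t i true (emb w h t) = false := by
      apply cfg_false
      rw [emb_val h (by omega)]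
      simp only [eq_self_iff_true, true_and]
      omega
    have hupd : Function.update (cfg w L (t+1) i true) (emb w h t)
        (!(cfg w L (t+1) i true (emb w h t))) = cfg w L t i true := by
      funext v
      rcases eq_or_ne v (emb w h t) with rfl | hv
      · rw [Function.update_self, hEt, hEf]
        rfl
      · rw [Function.update_of_ne hv]
        have hvt := ne_emb h (by omega) hv
        rw [cfg, cfg, decide_eq_decide]
        simp only [eq_self_iff_true, true_and]
        omega
    rw [hxs]
    obtain ⟨ih1, ih2⟩ := ih (by omega)
    constructor
    · exact ⟨hen, by rw [hupd]; exact ih1⟩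
    · show play (Function.update (cfg w L (t+1) i true) (emb w h t)
        (!(cfg w L (t+1) i true (emb w h t)))) (xsDown w h t) = _
      rw [hupd]; exact ih2

lemma cfg_i_irrel (w L X i j : ℕ) : cfg w L X i false = cfg w L X j false := by
  funext v
  rw [cfg, cfg, decide_eq_decide]
  simp only [Bool.false_eq_true, false_and, false_or]

lemma roundValid {w : ℕ} (h : 0 < w) (i : ℕ) (hi : i < w) :
    ValidSeq (AG w) (cfg w i 0 i false) (roundL w h i) ∧
    play (cfg w i 0 i false) (roundL w h i) = cfg w (i+1) 0 (i+1) false := by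
  have hA := phaseA h i i (Nat.le_of_lt hi) hi (w - 0) 0 (by omega) rfl
  have hB := phaseB h i i (Nat.le_of_lt hi) hi w le_rfl
  -- u goes IN
  have hUf : cfg w i w i false (emb w h (w+i)) = false := by
    apply cfg_false
    rw [emb_val h (by omega)]
    simp only [Bool.false_eq_true, false_and, false_or]
    omega
  have henU : Enabled (AG w) (cfg w i w i false) (emb w h (w+i)) := by
    left
    refine ⟨hUf, ?_⟩
    intro b hadj hdeg
    have ha1 : (emb w h (w+i)).val = w + i := emb_val h (by omega)
    have hb := adj_u_elim (by omega) (by omega) hadj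
    rw [ha1] at hb
    rcases hb with hb | hb
    · rw [deg_x h b (by omega), deg_u h (emb w h (w+i)) (by omega) (by omega)]
        at hdeg
      omega
    · apply cfg_false
      simp only [Bool.false_eq_true, false_and, false_or]
      omega
  have hupdU : Function.update (cfg w i w i false) (emb w h (w+i))
      (!(cfg w i w i false (emb w h (w+i)))) = cfg w i w i true := by
    funext v
    rcases eq_or_ne v (emb w h (w+i)) with rfl | hv
    · rw [Function.update_self, hUf,
        cfg_true _ (Or.inr (Or.inl ⟨rfl, emb_val h (by omega)⟩))]
      rfl
    · rw [Function.update_of_ne hv]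
      have hvt := ne_emb h (by omega) hv
      rw [cfg, cfg, decide_eq_decide]
      simp only [Bool.false_eq_true, false_and, false_or, eq_self_iff_true,
        true_and]
      omega
  -- leaf goes IN
  have hLf : cfg w i 0 i true (emb w h (2*w+i)) = false := by
    apply cfg_false
    rw [emb_val h (by omega)]
    simp only [eq_self_iff_true, true_and]
    omega
  have henL : Enabled (AG w) (cfg w i 0 i true) (emb w h (2*w+i)) := by
    left
    refine ⟨hLf, ?_⟩
    intro b hadj hdeg
    have ha1 : (emb w h (2*w+i)).val = 2*w + i := emb_val h (by omega)
    have hb := adj_leaf_elim (by omega) (by omega) hadj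
    rw [ha1] at hb
    rw [deg_u h b (by omega) (by omega), deg_leaf h (emb w h (2*w+i)) (by omega)]
      at hdeg
    omega
  have hupdL : Function.update (cfg w i 0 i true) (emb w h (2*w+i))
      (!(cfg w i 0 i true (emb w h (2*w+i)))) = cfg w (i+1) 0 i true := by
    funext v
    rcases eq_or_ne v (emb w h (2*w+i)) with rfl | hv
    · rw [Function.update_self, hLf,
        cfg_true _ (Or.inr (Or.inr (by rw [emb_val h (by omega)]; omega)))]
      rfl
    · rw [Function.update_of_ne hv]
      have hvt := ne_emb h (by omega) hv
      rw [cfg, cfg, decide_eq_decide]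
      simp only [eq_self_iff_true, true_and]
      omega
  -- u goes OUT
  have hUt : cfg w (i+1) 0 i true (emb w h (w+i)) = true :=
    cfg_true _ (Or.inr (Or.inl ⟨rfl, emb_val h (by omega)⟩))
  have henU2 : Enabled (AG w) (cfg w (i+1) 0 i true) (emb w h (w+i)) := by
    right
    refine ⟨hUt, emb w h (2*w+i), adj_uleaf h hi, ?_, ?_⟩
    · rw [deg_leaf h (emb w h (2*w+i)) (by rw [emb_val h (by omega)]; omega),
        deg_u h (emb w h (w+i)) (by rw [emb_val h (by omega)]; omega)
          (by rw [emb_val h (by omega)]; omega)]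
      omega
    · apply cfg_true
      rw [emb_val h (by omega)]
      omega
  have hupdU2 : Function.update (cfg w (i+1) 0 i true) (emb w h (w+i))
      (!(cfg w (i+1) 0 i true (emb w h (w+i)))) = cfg w (i+1) 0 (i+1) false := by
    funext v
    rcases eq_or_ne v (emb w h (w+i)) with rfl | hv
    · rw [Function.update_self, hUt, cfg_false _ ?_]
      · rfl
      · rw [emb_val h (by omega)]
        simp only [Bool.false_eq_true, false_and, false_or]
        omega
    · rw [Function.update_of_ne hv]
      have hvt := ne_emb h (by omega) hv
      rw [cfg, cfg, decide_eq_decide]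
      simp only [Bool.false_eq_true, false_and, false_or, eq_self_iff_true,
        true_and]
      omega
  -- assemble
  have v2 : ValidSeq (AG w) (cfg w i w i false) [emb w h (w+i)] :=
    ⟨henU, trivial⟩
  have p2 : play (cfg w i w i false) [emb w h (w+i)] = cfg w i w i true :=
    hupdU
  have v4 : ValidSeq (AG w) (cfg w (i+1) 0 i true) [emb w h (w+i)] :=
    ⟨henU2, trivial⟩
  have vpair : ValidSeq (AG w) (cfg w i 0 i true)
      [emb w h (2*w+i), emb w h (w+i)] := by
    refine ⟨henL, ?_⟩
    rw [hupdL]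
    exact v4
  have ppair : play (cfg w i 0 i true) [emb w h (2*w+i), emb w h (w+i)]
      = cfg w (i+1) 0 (i+1) false := by
    show play (Function.update _ _ _) [emb w h (w+i)] = _
    rw [hupdL]
    exact hupdU2
  have pfx1 : play (cfg w i 0 i false) (xsUp w h 0 ++ [emb w h (w+i)])
      = cfg w i w i true := by
    rw [play_append, hA.2, p2]
  have pfx2 : play (cfg w i 0 i false)
      (xsUp w h 0 ++ [emb w h (w+i)] ++ xsDown w h w) = cfg w i 0 i true := by
    rw [play_append, pfx1, hB.2]
  constructor
  · rw [roundL]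
    apply valid_append
    · apply valid_append
      · apply valid_append
        · exact hA.1
        · rw [hA.2]; exact v2
      · rw [pfx1]; exact hB.1
    · rw [pfx2]; exact vpair
  · rw [roundL, play_append, pfx2, ppair]

lemma fullValid {w : ℕ} (h : 0 < w) :
    ∀ n, n ≤ w →
      ValidSeq (AG w) (cfg w 0 0 0 false) (fullL w h n) ∧
      play (cfg w 0 0 0 false) (fullL w h n) = cfg w n 0 n false := by
  intro n
  induction n with
  | zero =>
    intro _
    have : fullL w h 0 = [] := by simp [fullL]
    rw [this]
    exact ⟨trivial, rfl⟩
  | succ n ih =>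
    intro hn
    obtain ⟨ih1, ih2⟩ := ih (by omega)
    have hsplit : fullL w h (n+1) = fullL w h n ++ roundL w h n := by
      rw [fullL, fullL, List.range_succ, List.flatMap_append]
      simp
    have hr := roundValid h n (by omega)
    constructor
    · rw [hsplit]
      apply valid_append
      · exact ih1
      · rw [ih2]
        exact hr.1
    · rw [hsplit, play_append, ih2, hr.2]

lemma valid_to_moves {V : Type*} [DecidableEq V] (G : SimpleGraph V)
    {s : V → Bool} {l : List V} (h : ValidSeq G s l) :
    ∀ i < l.length, Move G (play s (l.take i)) (play s (l.take (i+1))) := by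
  induction l generalizing s with
  | nil => intro i hi; simp at hi
  | cons v t ih =>
    intro i hi
    cases i with
    | zero => exact ⟨v, h.1, rfl⟩
    | succ j =>
      simp only [List.take_succ_cons, play]
      exact ih h.2 j (by simpa using hi)


/-- For every `w ≥ 1` there is a graph with exactly `5w` vertices and maximum
degree `w + 2` admitting an execution of A_MIS under the central scheduler,
starting from the all-OUT configuration, with at least `w ^ 2` moves. -/
theorem stmt3 (w : ℕ) (hw : 1 ≤ w) :
    ∃ G : SimpleGraph (Fin (5 * w)), maxDeg G = w + 2 ∧
      ∃ (m : ℕ) (f : ℕ → Fin (5 * w) → Bool),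
        w ^ 2 ≤ m ∧ f 0 = (fun _ => false) ∧
        ∀ i < m, Move G (f i) (f (i + 1)) := by
  have h : 0 < w := hw
  refine ⟨AG w, maxDeg_AG hw, (fullL w h w).length,
    fun k => play (cfg w 0 0 0 false) ((fullL w h w).take k), ?_, ?_, ?_⟩
  · rw [len_fullL, pow_two]
    exact Nat.mul_le_mul (le_refl w) (by omega)
  · show play (cfg w 0 0 0 false) ((fullL w h w).take 0) = _
    rw [List.take_zero]
    show cfg w 0 0 0 false = _
    funext v
    apply cfg_false
    simp only [Bool.false_eq_true, false_and, false_or]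
    omega
  · intro k hk
    exact valid_to_moves (AG w) (fullValid h w le_rfl).1 k hk
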